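/- Let φ>0, r∈(0,1), z₂>0 and k∈ℕ. Then the k-th conditional moment of the Kibble bivariate gamma distribution is given by a generalized Laguerre polynomial: ∫₀^∞ z₁^k · g_{φ,r}(z₁,z₂) dz₁ = [φ^φ z₂^{φ−1} e^{−φz₂}/Γ(φ)] · k! · ((1−r)/φ)^k · L_k^{φ−1}(−z₂ φ r/(1−r)). Equivalently, for the GAR(1) process with r=ρ^j, E(Z_{t+j}^k | Z_t = z) = k! ((1−ρ^j)/φ)^k L_k^{φ−1}(−z φρ^j/(1−ρ^j)). -/

import Mathlib

open MeasureTheory Real Set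

/-- Modified Bessel function of the first kind (series form). -/
noncomputable def besselI (α x : ℝ) : ℝ :=
  ∑' k : ℕ, (x / 2) ^ (2 * (k : ℝ) + α) / (Real.Gamma ((k : ℝ) + α + 1) * (Nat.factorial k : ℝ))

/-- Gamma density with rate `γ` and shape `α`. -/
noncomputable def gammaPdf (γ α z : ℝ) : ℝ :=
  γ ^ α * z ^ (α - 1) * Real.exp (-γ * z) / Real.Gamma α

/-- Kibble bivariate gamma density with parameters `φ > 0` and `r ∈ (0,1)`. -/
noncomputable def kibble (φ r z₁ z₂ : ℝ) : ℝ :=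
  φ ^ (φ + 1) / ((1 - r) * Real.Gamma φ) * (z₁ * z₂ / r) ^ ((φ - 1) / 2) *
    Real.exp (-φ * (z₁ + z₂) / (1 - r)) *
    besselI (φ - 1) (2 * φ * Real.sqrt (r * z₁ * z₂) / (1 - r))

/-- Conditional normal density of the NSVt model given latent `z`: `N(μ, σ²/z)`. -/
noncomputable def normCond (σ μ y z : ℝ) : ℝ :=
  Real.sqrt z / (Real.sqrt (2 * Real.pi) * σ) * Real.exp (-z * (y - μ) ^ 2 / (2 * σ ^ 2))

/-- Student-t density with `ν` degrees of freedom, location `μ` and scale `σ`. -/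
noncomputable def studentTPdf (ν μ σ y : ℝ) : ℝ :=
  Real.Gamma ((ν + 1) / 2) / (Real.Gamma (ν / 2) * Real.sqrt (Real.pi * ν) * σ) *
    (1 + (y - μ) ^ 2 / (ν * σ ^ 2)) ^ (-(ν + 1) / 2)

/-- Gauss hypergeometric series `₂F₁(a₁,a₂;b;x)`. -/
noncomputable def hyp2F1 (a₁ a₂ b x : ℝ) : ℝ :=
  ∑' k : ℕ, Real.Gamma ((k : ℝ) + a₁) * Real.Gamma ((k : ℝ) + a₂) * Real.Gamma b /
    (Real.Gamma a₁ * Real.Gamma a₂ * Real.Gamma ((k : ℝ) + b)) * x ^ k / (Nat.factorial k : ℝ)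

/-- Confluent hypergeometric (Kummer) series `₁F₁(a;b;x)`. -/
noncomputable def hyp1F1 (a b x : ℝ) : ℝ :=
  ∑' k : ℕ, Real.Gamma ((k : ℝ) + a) * Real.Gamma b /
    (Real.Gamma a * Real.Gamma ((k : ℝ) + b)) * x ^ k / (Nat.factorial k : ℝ)

/-- Generalized Laguerre polynomial of degree `n` with parameter `α`. -/
noncomputable def laguerreL (n : ℕ) (α x : ℝ) : ℝ :=
  ∑ i ∈ Finset.range (n + 1),
    (-1 : ℝ) ^ i * Real.Gamma ((n : ℝ) + α + 1) /
      (Real.Gamma (α + (i : ℝ) + 1) * (Nat.factorial (n - i) : ℝ) * (Nat.factorial i : ℝ)) * x ^ i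

/-- Negative binomial pmf with parameters `φ > 0` and `r ∈ (0,1)`. -/
noncomputable def nbinomPmf (φ r : ℝ) (u : ℕ) : ℝ :=
  Real.Gamma (φ + u) / (Real.Gamma φ * (Nat.factorial u : ℝ)) * (1 - r) ^ φ * r ^ u

/-- The quantity `ω(y₁,y₂)` appearing in the pairwise joint density of the NSVt model. -/
noncomputable def omegaFn (ν σ r μ₁ μ₂ y₁ y₂ : ℝ) : ℝ :=
  ((1 + (1 - r) * (y₁ - μ₁) ^ 2 / (ν * σ ^ 2)) *
    (1 + (1 - r) * (y₂ - μ₂) ^ 2 / (ν * σ ^ 2)))⁻¹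

/-- Pairwise joint density of the NSVt model (with `r = ρʲ`). -/
noncomputable def pairDensity (ν σ r μ₁ μ₂ y₁ y₂ : ℝ) : ℝ :=
  (1 - r) ^ (ν / 2 + 1) / (Real.pi * ν * σ ^ 2) *
    (Real.Gamma ((ν + 1) / 2) / Real.Gamma (ν / 2)) ^ 2 *
    omegaFn ν σ r μ₁ μ₂ y₁ y₂ ^ ((ν + 1) / 2) *
    hyp2F1 ((ν + 1) / 2) ((ν + 1) / 2) (ν / 2) (r * omegaFn ν σ r μ₁ μ₂ y₁ y₂)


noncomputable def ps (x : ℝ) (n : ℕ) : ℝ := ∏ j ∈ Finset.range n, (x + j)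

lemma ps_zero (x : ℝ) : ps x 0 = 1 := by simp [ps]

lemma ps_succ (x : ℝ) (n : ℕ) : ps x (n + 1) = ps x n * (x + n) := by
  simp [ps, Finset.prod_range_succ]

lemma ps_succ' (x : ℝ) (n : ℕ) : ps x (n + 1) = x * ps (x + 1) n := by
  rw [ps, Finset.prod_range_succ']
  rw [show (∏ j ∈ Finset.range n, (x + ((j : ℕ) + 1 : ℕ))) = ps (x + 1) n from
    Finset.prod_congr rfl (fun j _ => by push_cast; ring)]
  push_cast; ring

lemma ps_pos {x : ℝ} (hx : 0 < x) (n : ℕ) : 0 < ps x n := by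
  induction n with
  | zero => simp [ps_zero]
  | succ n ih => rw [ps_succ]; positivity

lemma Gamma_ps {x : ℝ} (hx : 0 < x) (n : ℕ) :
    Real.Gamma (x + n) = Real.Gamma x * ps x n := by
  induction n with
  | zero => simp [ps_zero]
  | succ n ih =>
    have h : x + ((n : ℕ) + 1 : ℕ) = (x + n) + 1 := by push_cast; ring
    rw [h, Real.Gamma_add_one (by positivity), ih, ps_succ]
    ring

lemma ps_add (x : ℝ) (m n : ℕ) : ps x (m + n) = ps x m * ps (x + m) n := by
  induction n with
  | zero => simp [ps_zero]
  | succ n ih =>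
    have h : m + (n + 1) = (m + n) + 1 := by ring
    rw [h, ps_succ, ih, ps_succ]
    push_cast; ring

lemma ps_shift (x : ℝ) (m : ℕ) :
    ps (x + 1) m = ps x m + m * ps (x + 1) (m - 1) := by
  cases m with
  | zero => simp [ps_zero]
  | succ m =>
    have h1 : ps (x + 1) (m + 1) = ps (x + 1) m * (x + 1 + m) := ps_succ _ _
    have h2 : ps x (m + 1) = x * ps (x + 1) m := ps_succ' _ _
    rw [show (m + 1 : ℕ) - 1 = m from rfl, h1, h2]
    push_cast; ring

lemma vand (k : ℕ) : ∀ (x : ℝ) (n : ℕ),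
    ps (x + k) n = ∑ i ∈ Finset.range (n + 1),
      (k.choose i : ℝ) * (n.choose i : ℝ) * (Nat.factorial i : ℝ) * ps (x + i) (n - i) := by
  induction k with
  | zero =>
    intro x n
    rw [Finset.sum_eq_single 0]
    · simp
    · intro i _ hi
      simp [Nat.choose_eq_zero_of_lt (Nat.pos_of_ne_zero hi)]
    · intro h; simp at h
  | succ k ih =>
    intro x n
    set a : ℕ → ℝ := fun i => (n.choose i : ℝ) * (Nat.factorial i : ℝ) * ps (x + i) (n - i) with ha
    set b : ℕ → ℝ := fun i => (n.choose i : ℝ) * (Nat.factorial i : ℝ) * ((n - i : ℕ) : ℝ)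
      * ps (x + i + 1) (n - i - 1) with hb
    have hx : x + ((k + 1 : ℕ) : ℝ) = (x + 1) + (k : ℕ) := by push_cast; ring
    rw [hx, ih (x + 1) n]
    have split : ∀ i ∈ Finset.range (n + 1),
        (k.choose i : ℝ) * (n.choose i : ℝ) * (Nat.factorial i : ℝ) * ps (x + 1 + i) (n - i)
        = (k.choose i : ℝ) * a i + (k.choose i : ℝ) * b i := by
      intro i _
      have h : (x + 1 + (i : ℕ) : ℝ) = (x + i) + 1 := by ring
      rw [h, ps_shift (x + i) (n - i), ha, hb]
      ring
    rw [Finset.sum_congr rfl split, Finset.sum_add_distrib]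
    -- target sum split by Pascal
    have pascal : ∀ i ∈ Finset.range (n + 1),
        ((k + 1).choose i : ℝ) * (n.choose i : ℝ) * (Nat.factorial i : ℝ) * ps (x + i) (n - i)
        = (k.choose i : ℝ) * a i
          + (if i = 0 then 0 else (k.choose (i - 1) : ℝ) * a i) := by
      intro i _
      cases i with
      | zero => simp [ha]
      | succ j =>
        rw [if_neg (Nat.succ_ne_zero j), Nat.succ_sub_one]
        have hc : (((k + 1).choose (j + 1) : ℕ) : ℝ)
            = (k.choose j : ℝ) + (k.choose (j + 1) : ℝ) := by
          rw [Nat.choose_succ_succ]; push_cast; ring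
        rw [hc]
        simp only [ha]
        ring
    rw [Finset.sum_congr rfl pascal, Finset.sum_add_distrib]
    congr 1
    -- ∑ if-term = ∑ k.choose i * b i
    rw [Finset.sum_range_succ' (fun i => if i = 0 then 0 else (k.choose (i - 1) : ℝ) * a i) n]
    rw [Finset.sum_range_succ (fun i => (k.choose i : ℝ) * b i) n]
    have hbn : b n = 0 := by simp [hb]
    rw [hbn, if_pos rfl, mul_zero, add_zero, add_zero]
    apply Finset.sum_congr rfl
    intro i hi
    have hin : i < n := Finset.mem_range.mp hi
    rw [if_neg (Nat.succ_ne_zero i), Nat.succ_sub_one]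
    congr 1
    -- a (i+1) = b i
    have hch : n.choose (i + 1) * (i + 1) = n.choose i * (n - i) := Nat.choose_succ_right_eq n i
    have hnat : n.choose (i + 1) * Nat.factorial (i + 1)
        = n.choose i * Nat.factorial i * (n - i) := by
      rw [Nat.factorial_succ, ← mul_assoc, hch]; ring
    have hcast : (n.choose (i + 1) : ℝ) * (Nat.factorial (i + 1) : ℝ)
        = (n.choose i : ℝ) * (Nat.factorial i : ℝ) * ((n - i : ℕ) : ℝ) := by
      exact_mod_cast congrArg (Nat.cast : ℕ → ℝ) hnat
    simp only [ha, hb]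
    rw [hcast]
    have h1 : (x + ((i + 1 : ℕ) : ℝ)) = x + (i : ℕ) + 1 := by push_cast; ring
    have h2 : n - (i + 1) = n - i - 1 := rfl
    rw [h1, h2]

lemma exp_tsum (t : ℝ) : Real.exp t = ∑' n : ℕ, t ^ n / (Nat.factorial n : ℝ) := by
  rw [Real.exp_eq_exp_ℝ, NormedSpace.exp_eq_tsum_div]

lemma summable_shift (t : ℝ) (i : ℕ) :
    Summable (fun n : ℕ => if i ≤ n then t ^ n / (Nat.factorial (n - i) : ℝ) else 0) := by
  apply (summable_nat_add_iff i).mp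
  have h : (fun n : ℕ => if i ≤ n + i then t ^ (n + i) / (Nat.factorial (n + i - i) : ℝ) else 0)
      = fun n : ℕ => t ^ i * (t ^ n / (Nat.factorial n : ℝ)) := by
    funext n
    rw [if_pos (Nat.le_add_left i n), Nat.add_sub_cancel, pow_add]
    ring
  rw [h]
  exact (Real.summable_pow_div_factorial t).mul_left _

lemma tsum_shift (t : ℝ) (i : ℕ) :
    ∑' n : ℕ, (if i ≤ n then t ^ n / (Nat.factorial (n - i) : ℝ) else 0)
      = t ^ i * Real.exp t := by
  rw [← Summable.sum_add_tsum_nat_add i (summable_shift t i)]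
  have h0 : ∑ n ∈ Finset.range i,
      (if i ≤ n then t ^ n / (Nat.factorial (n - i) : ℝ) else 0) = 0 :=
    Finset.sum_eq_zero (fun n hn => if_neg (by simp at hn; omega))
  rw [h0, zero_add]
  have h : (fun n : ℕ => if i ≤ n + i then t ^ (n + i) / (Nat.factorial (n + i - i) : ℝ) else 0)
      = fun n : ℕ => t ^ i * (t ^ n / (Nat.factorial n : ℝ)) := by
    funext n
    rw [if_pos (Nat.le_add_left i n), Nat.add_sub_cancel, pow_add]
    ring
  rw [h, tsum_mul_left, ← exp_tsum]

lemma series_key {φ : ℝ} (hφ : 0 < φ) (k : ℕ) (t : ℝ) :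
    Summable (fun n : ℕ =>
      Real.Gamma (φ + k + n) / (Real.Gamma (φ + n) * (Nat.factorial n : ℝ)) * t ^ n)
    ∧ (∑' n : ℕ,
        Real.Gamma (φ + k + n) / (Real.Gamma (φ + n) * (Nat.factorial n : ℝ)) * t ^ n)
      = Real.exp t * ((Nat.factorial k : ℝ) * laguerreL k (φ - 1) (-t)) := by
  have hφk : (0:ℝ) < φ + (k:ℝ) := by positivity
  set F : ℕ → ℕ → ℝ := fun i n =>
    (k.choose i : ℝ) * Real.Gamma (φ + k) / Real.Gamma (φ + i) *
      (if i ≤ n then t ^ n / (Nat.factorial (n - i) : ℝ) else 0) with hF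
  have step1 : ∀ n : ℕ,
      Real.Gamma (φ + k + n) / (Real.Gamma (φ + n) * (Nat.factorial n : ℝ)) * t ^ n
        = ∑ i ∈ Finset.range (k + 1), F i n := by
    intro n
    have hGkn : Real.Gamma (φ + k + n) = Real.Gamma (φ + k) * ps (φ + k) n := Gamma_ps hφk n
    have hGn : Real.Gamma (φ + n) = Real.Gamma φ * ps φ n := Gamma_ps hφ n
    have lhs_eq : Real.Gamma (φ + k + n) / (Real.Gamma (φ + n) * (Nat.factorial n : ℝ)) * t ^ n
        = ∑ i ∈ Finset.range (n + 1), (Real.Gamma (φ + k) *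
            ((k.choose i : ℝ) * (n.choose i : ℝ) * (Nat.factorial i : ℝ) * ps (φ + i) (n - i))
            / (Real.Gamma φ * ps φ n * (Nat.factorial n : ℝ)) * t ^ n) := by
      rw [hGkn, hGn, vand k φ n, Finset.mul_sum, Finset.sum_div, Finset.sum_mul]
    rw [lhs_eq]
    have e1 : ∀ i ∈ Finset.range (n + 1), (Real.Gamma (φ + k) *
            ((k.choose i : ℝ) * (n.choose i : ℝ) * (Nat.factorial i : ℝ) * ps (φ + i) (n - i))
            / (Real.Gamma φ * ps φ n * (Nat.factorial n : ℝ)) * t ^ n) = F i n := by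
      intro i hi
      have hin : i ≤ n := by simp at hi; omega
      have hΓi : Real.Gamma (φ + i) = Real.Gamma φ * ps φ i := Gamma_ps hφ i
      have hpsn : ps φ n = ps φ i * ps (φ + i) (n - i) := by
        have h := ps_add φ i (n - i)
        rwa [Nat.add_sub_cancel' hin] at h
      have hfacn : (n.choose i : ℝ) * (Nat.factorial i : ℝ) * (Nat.factorial (n - i) : ℝ)
          = (Nat.factorial n : ℝ) := by
        exact_mod_cast congrArg (Nat.cast : ℕ → ℝ) (Nat.choose_mul_factorial_mul_factorial hin)
      have h1 : (0:ℝ) < ps φ i := ps_pos hφ i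
      have h2 : (0:ℝ) < ps (φ + i) (n - i) := ps_pos (by positivity) (n - i)
      have h3 : Real.Gamma φ ≠ 0 := (Real.Gamma_pos_of_pos hφ).ne'
      have h5 : (Nat.factorial (n - i) : ℝ) ≠ 0 := by positivity
      have h6 : (n.choose i : ℝ) ≠ 0 := Nat.cast_ne_zero.mpr (Nat.choose_pos hin).ne'
      have h7 : (Nat.factorial i : ℝ) ≠ 0 := by positivity
      simp only [hF]
      rw [if_pos hin, hΓi, hpsn, ← hfacn]
      field_simp
    rw [Finset.sum_congr rfl e1]
    rcases le_or_gt n k with hnk | hnk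
    · apply Finset.sum_subset (Finset.range_subset_range.mpr (by omega))
      intro i hi1 hi2
      have hni : n < i := by
        simp only [Finset.mem_range] at hi2
        omega
      simp only [hF]
      rw [if_neg (by omega)]
      ring
    · symm
      apply Finset.sum_subset (Finset.range_subset_range.mpr (by omega))
      intro i hi1 hi2
      have hki : k < i := by
        simp only [Finset.mem_range] at hi2
        omega
      simp only [hF]
      rw [Nat.choose_eq_zero_of_lt hki]
      push_cast
      ring
  have sumF : ∀ i : ℕ, Summable (fun n => F i n) := fun i => (summable_shift t i).mul_left _
  have hfeq : (fun n : ℕ =>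
      Real.Gamma (φ + k + n) / (Real.Gamma (φ + n) * (Nat.factorial n : ℝ)) * t ^ n)
      = fun n => ∑ i ∈ Finset.range (k + 1), F i n := funext step1
  constructor
  · rw [hfeq]
    exact summable_sum (fun i _ => sumF i)
  rw [hfeq, Summable.tsum_finsetSum (fun i _ => sumF i)]
  have tsumF : ∀ i : ℕ, ∑' n, F i n
      = (k.choose i : ℝ) * Real.Gamma (φ + k) / Real.Gamma (φ + i) * (t ^ i * Real.exp t) := by
    intro i
    simp only [hF]
    rw [tsum_mul_left, tsum_shift]
  rw [Finset.sum_congr rfl (fun i _ => tsumF i)]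
  rw [laguerreL, Finset.mul_sum, Finset.mul_sum]
  apply Finset.sum_congr rfl
  intro i hi
  have hik : i ≤ k := by simp at hi; omega
  have hfac : (k.choose i : ℝ) * (Nat.factorial i : ℝ) * (Nat.factorial (k - i) : ℝ)
      = (Nat.factorial k : ℝ) := by
    exact_mod_cast congrArg (Nat.cast : ℕ → ℝ) (Nat.choose_mul_factorial_mul_factorial hik)
  have hg1 : ((k:ℝ) + (φ - 1) + 1) = φ + k := by ring
  have hg2 : ((φ - 1) + (i:ℝ) + 1) = φ + i := by ring
  rw [hg1, hg2, ← hfac]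
  have hΓi : Real.Gamma (φ + i) ≠ 0 :=
    (Real.Gamma_pos_of_pos (by positivity)).ne'
  have hneg : ((-t):ℝ) ^ i = (-1:ℝ) ^ i * t ^ i := by rw [neg_pow]
  have hsq : (-1:ℝ) ^ i * (-1:ℝ) ^ i = 1 := by
    rw [← pow_add]
    exact Even.neg_one_pow ⟨i, by ring⟩
  have has : (-1:ℝ) ^ i * Real.Gamma (φ + (k:ℝ)) /
        (Real.Gamma (φ + (i:ℝ)) * (Nat.factorial (k - i) : ℝ) * (Nat.factorial i : ℝ)) * (-t) ^ i
      = Real.Gamma (φ + (k:ℝ)) /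
        (Real.Gamma (φ + (i:ℝ)) * (Nat.factorial (k - i) : ℝ) * (Nat.factorial i : ℝ)) * t ^ i := by
    rw [hneg]
    linear_combination (Real.Gamma (φ + (k:ℝ)) /
        (Real.Gamma (φ + (i:ℝ)) * (Nat.factorial (k - i) : ℝ) * (Nat.factorial i : ℝ)) * t ^ i) * hsq
  rw [has]
  have hfi : (Nat.factorial i : ℝ) ≠ 0 := by positivity
  have hfki : (Nat.factorial (k - i) : ℝ) ≠ 0 := by positivity
  field_simp

/-- conditional moments of the Kibble bivariate gamma / GAR(1) process via
generalized Laguerre polynomials. -/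
theorem kibble_cond_moment (φ r z₂ : ℝ) (k : ℕ) (hφ : 0 < φ) (hr : r ∈ Set.Ioo (0 : ℝ) 1)
    (hz : 0 < z₂) :
    (∫ z₁ in Set.Ioi (0 : ℝ), z₁ ^ k * kibble φ r z₁ z₂) =
      (φ ^ φ * z₂ ^ (φ - 1) * Real.exp (-φ * z₂) / Real.Gamma φ) *
        (Nat.factorial k : ℝ) * ((1 - r) / φ) ^ k *
        laguerreL k (φ - 1) (-(z₂ * φ * r) / (1 - r)) := by
  obtain ⟨hr0, hr1⟩ := hr
  have h1r : (0:ℝ) < 1 - r := by linarith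
  have hΓφ : (0:ℝ) < Real.Gamma φ := Real.Gamma_pos_of_pos hφ
  set c : ℝ := φ / (1 - r) with hc
  have hcpos : 0 < c := by rw [hc]; positivity
  set t : ℝ := z₂ * φ * r / (1 - r) with ht
  set q : ℝ := φ ^ 2 * r * z₂ / (1 - r) ^ 2 with hq
  have hqpos : 0 < q := by rw [hq]; positivity
  set K : ℝ := φ ^ (φ + 1) / ((1 - r) * Real.Gamma φ) *
      ((φ / (1 - r)) ^ (φ - 1) * z₂ ^ (φ - 1)) * Real.exp (-(φ * z₂ / (1 - r))) with hK
  have hKpos : 0 < K := by rw [hK]; positivity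
  have hupos : (0:ℝ) < (1 - r) / φ := by positivity
  set f : ℕ → ℝ → ℝ := fun n z₁ =>
      (K * (q ^ n / (Real.Gamma (φ + n) * (Nat.factorial n : ℝ)))) *
        (z₁ ^ (φ + ((n + k : ℕ) : ℝ) - 1) * Real.exp (-(c * z₁))) with hf
  have hqt : q * ((1 - r) / φ) = t := by rw [hq, ht]; field_simp
  have hΓn : ∀ n : ℕ, (0:ℝ) < Real.Gamma (φ + n) := fun n => Real.Gamma_pos_of_pos (by positivity)
  -- Step A : pointwise identity on Ioi 0
  have stepA : Set.EqOn (fun z₁ => z₁ ^ k * kibble φ r z₁ z₂) (fun z₁ => ∑' n, f n z₁) (Ioi 0) := by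
    intro z₁ hz₁
    have hz₁0 : (0:ℝ) < z₁ := hz₁
    have hrz : (0:ℝ) < r * z₁ * z₂ := by positivity
    have hsq : (0:ℝ) < Real.sqrt (r * z₁ * z₂) := Real.sqrt_pos.mpr hrz
    set w : ℝ := φ * Real.sqrt (r * z₁ * z₂) / (1 - r) with hw
    have hwpos : 0 < w := by rw [hw]; positivity
    have hP2pos : (0:ℝ) < (r * z₁ * z₂) ^ ((φ - 1) / 2) := Real.rpow_pos_of_pos hrz _
    have hw2 : w ^ 2 = q * z₁ := by
      rw [hw, hq, div_pow, mul_pow, Real.sq_sqrt hrz.le]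
      ring
    have hwphi : w ^ (φ - 1) = (φ / (1 - r)) ^ (φ - 1) * (r * z₁ * z₂) ^ ((φ - 1) / 2) := by
      rw [hw, show φ * Real.sqrt (r * z₁ * z₂) / (1 - r)
          = (φ / (1 - r)) * Real.sqrt (r * z₁ * z₂) from by ring]
      rw [Real.mul_rpow (by positivity) (Real.sqrt_nonneg _)]
      congr 1
      rw [Real.sqrt_eq_rpow, ← Real.rpow_mul hrz.le]
      congr 1
      ring
    have hpow : ∀ n : ℕ, w ^ (2 * (n:ℝ) + (φ - 1))
        = q ^ n * z₁ ^ n * ((φ / (1 - r)) ^ (φ - 1) * (r * z₁ * z₂) ^ ((φ - 1) / 2)) := by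
      intro n
      rw [show (2 * (n:ℝ) + (φ - 1)) = ((2 * n : ℕ) : ℝ) + (φ - 1) from by push_cast; ring]
      rw [Real.rpow_add hwpos, Real.rpow_natCast, pow_mul, hw2, mul_pow, hwphi]
    have hz₁pow : ∀ n : ℕ, z₁ ^ (φ + ((n + k : ℕ) : ℝ) - 1)
        = z₁ ^ (φ - 1) * (z₁ ^ n * z₁ ^ k) := by
      intro n
      rw [show φ + ((n + k : ℕ) : ℝ) - 1 = (φ - 1) + ((n + k : ℕ) : ℝ) from by push_cast; ring]
      rw [Real.rpow_add hz₁0, Real.rpow_natCast, pow_add]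
    have hE : Real.exp (-φ * (z₁ + z₂) / (1 - r))
        = Real.exp (-(c * z₁)) * Real.exp (-(φ * z₂ / (1 - r))) := by
      rw [← Real.exp_add, hc]
      congr 1
      field_simp
      ring
    have hP : (z₁ * z₂ / r) ^ ((φ - 1) / 2)
        = z₁ ^ (φ - 1) * z₂ ^ (φ - 1) / (r * z₁ * z₂) ^ ((φ - 1) / 2) := by
      rw [eq_div_iff hP2pos.ne', ← Real.mul_rpow (by positivity) hrz.le]
      rw [show z₁ * z₂ / r * (r * z₁ * z₂) = (z₁ * z₂) ^ (2:ℕ) from by field_simp]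
      rw [← Real.rpow_natCast (z₁ * z₂) 2, ← Real.rpow_mul (by positivity)]
      rw [show ((2:ℕ):ℝ) * ((φ - 1) / 2) = φ - 1 from by push_cast; ring]
      exact Real.mul_rpow hz₁0.le hz.le
    show z₁ ^ k * kibble φ r z₁ z₂ = ∑' n, f n z₁
    symm
    calc ∑' n, f n z₁
        = ∑' n : ℕ, (z₁ ^ k * (φ ^ (φ + 1) / ((1 - r) * Real.Gamma φ) * (z₁ * z₂ / r) ^ ((φ - 1) / 2) *
            Real.exp (-φ * (z₁ + z₂) / (1 - r)))) *
            (w ^ (2 * (n:ℝ) + (φ - 1)) / (Real.Gamma ((n:ℝ) + (φ - 1) + 1) * (Nat.factorial n : ℝ))) := by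
          apply tsum_congr
          intro n
          simp only [hf]
          rw [show ((n:ℝ) + (φ - 1) + 1) = φ + (n:ℝ) from by ring]
          rw [hpow n, hz₁pow n, hE, hP, hK]
          have hfn : (Nat.factorial n : ℝ) ≠ 0 := by positivity
          field_simp
      _ = (z₁ ^ k * (φ ^ (φ + 1) / ((1 - r) * Real.Gamma φ) * (z₁ * z₂ / r) ^ ((φ - 1) / 2) *
            Real.exp (-φ * (z₁ + z₂) / (1 - r)))) *
            ∑' n : ℕ, (w ^ (2 * (n:ℝ) + (φ - 1)) /
              (Real.Gamma ((n:ℝ) + (φ - 1) + 1) * (Nat.factorial n : ℝ))) :=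
          tsum_mul_left
      _ = z₁ ^ k * kibble φ r z₁ z₂ := by
          rw [kibble, besselI]
          rw [show w = 2 * φ * Real.sqrt (r * z₁ * z₂) / (1 - r) / 2 from by rw [hw]; ring]
          ring
  -- integrability of each f n
  have hInt : ∀ n : ℕ, IntegrableOn (f n) (Ioi 0) := by
    intro n
    have hs : (-1:ℝ) < φ + ((n + k : ℕ) : ℝ) - 1 := by
      have : (0:ℝ) ≤ ((n + k : ℕ) : ℝ) := Nat.cast_nonneg _
      linarith
    have h1 := integrableOn_rpow_mul_exp_neg_mul_rpow (p := 1) hs one_pos hcpos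
    have h0 : IntegrableOn
        (fun z₁ : ℝ => z₁ ^ (φ + ((n + k : ℕ) : ℝ) - 1) * Real.exp (-(c * z₁))) (Ioi 0) := by
      apply h1.congr_fun _ measurableSet_Ioi
      intro x _
      simp only [Real.rpow_one, neg_mul]
    exact h0.const_mul _
  -- value of each integral
  have hvalue : ∀ n : ℕ, (∫ z in Ioi 0, f n z)
      = (K * (((1 - r) / φ) ^ φ * ((1 - r) / φ) ^ k)) *
        (Real.Gamma (φ + (k:ℝ) + (n:ℝ)) / (Real.Gamma (φ + n) * (Nat.factorial n : ℝ)) * t ^ n) := by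
    intro n
    simp only [hf]
    rw [MeasureTheory.integral_const_mul]
    rw [integral_rpow_mul_exp_neg_mul_Ioi (by positivity) hcpos]
    rw [show (1 / c : ℝ) = (1 - r) / φ from by rw [hc, one_div_div]]
    rw [show (φ + ((n + k : ℕ):ℝ)) = φ + (k:ℝ) + (n:ℝ) from by push_cast; ring]
    rw [Real.rpow_add hupos, Real.rpow_add hupos, Real.rpow_natCast, Real.rpow_natCast]
    rw [show t ^ n = q ^ n * ((1 - r) / φ) ^ n from by rw [← mul_pow, hqt]]
    ring
  -- nonnegativity and norms
  have hnorm : ∀ n : ℕ, (∫ z in Ioi 0, ‖f n z‖) = ∫ z in Ioi 0, f n z := by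
    intro n
    apply setIntegral_congr_fun measurableSet_Ioi
    intro z hz
    have hz0 : (0:ℝ) < z := hz
    simp only [hf]
    apply Real.norm_of_nonneg
    have h1 : (0:ℝ) ≤ K * (q ^ n / (Real.Gamma (φ + n) * (Nat.factorial n : ℝ))) := by
      have := hΓn n; positivity
    exact mul_nonneg h1 (mul_nonneg (Real.rpow_nonneg hz0.le _) (Real.exp_pos _).le)
  have hSummNorm : Summable (fun n : ℕ => ∫ z in Ioi 0, ‖f n z‖) := by
    have heq : (fun n : ℕ => ∫ z in Ioi 0, ‖f n z‖)
        = fun n : ℕ => (K * (((1 - r) / φ) ^ φ * ((1 - r) / φ) ^ k)) *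
          (Real.Gamma (φ + (k:ℝ) + (n:ℝ)) / (Real.Gamma (φ + n) * (Nat.factorial n : ℝ)) * t ^ n) :=
      funext fun n => by rw [hnorm n, hvalue n]
    rw [heq]
    exact ((series_key hφ k t).1).mul_left _
  -- assemble
  rw [setIntegral_congr_fun measurableSet_Ioi stepA]
  rw [← integral_tsum_of_summable_integral_norm hInt hSummNorm]
  rw [tsum_congr hvalue, tsum_mul_left, (series_key hφ k t).2]
  rw [show -(z₂ * φ * r) / (1 - r) = -t from by rw [ht]; ring]
  -- final scalar identity
  have hphi1 : φ ^ (φ + 1) = φ ^ φ * φ := by rw [Real.rpow_add hφ, Real.rpow_one]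
  have hu1 : ((1 - r) / φ) ^ φ = ((1 - r) / φ) ^ (φ - 1) * ((1 - r) / φ) := by
    have h := Real.rpow_add hupos (φ - 1) 1
    rw [Real.rpow_one] at h
    rw [show (φ - 1 + 1 : ℝ) = φ from by ring] at h
    exact h
  have hone : (φ / (1 - r)) ^ (φ - 1) * ((1 - r) / φ) ^ (φ - 1) = 1 := by
    rw [← Real.mul_rpow (by positivity) (by positivity)]
    rw [show (φ / (1 - r)) * ((1 - r) / φ) = 1 from by field_simp]
    exact Real.one_rpow _
  have hexp2 : Real.exp (-(φ * z₂ / (1 - r))) * Real.exp t = Real.exp (-φ * z₂) := by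
    rw [← Real.exp_add, ht]
    congr 1
    field_simp
    ring
  have hD : K * ((1 - r) / φ) ^ φ * Real.exp t
      = φ ^ φ * z₂ ^ (φ - 1) * Real.exp (-φ * z₂) / Real.Gamma φ := by
    rw [hK, hphi1, hu1, ← hexp2, div_mul_eq_div_div]
    have hu2 : φ * ((1 - r) / φ) / (1 - r) = 1 := by field_simp
    linear_combination (φ ^ φ * z₂ ^ (φ - 1) * Real.exp (-(φ * z₂ / (1 - r))) * Real.exp t /
        Real.Gamma φ * ((φ / (1 - r)) ^ (φ - 1) * ((1 - r) / φ) ^ (φ - 1))) * hu2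
      + (φ ^ φ * z₂ ^ (φ - 1) * Real.exp (-(φ * z₂ / (1 - r))) * Real.exp t / Real.Gamma φ) * hone
  linear_combination (((1 - r) / φ) ^ k * (Nat.factorial k : ℝ) *
    laguerreL k (φ - 1) (-t)) * hD
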